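/- Suppose f, g satisfy the Schrödinger fixed-point equations for a bounded nonnegative cost c with ∫ g dν = 0 and ∫ f dμ = EOT_c^λ(μ,ν) ≥ 0. Then ‖f‖_∞ ≤ ‖c‖_∞ and ‖g‖_∞ ≤ ‖c‖_∞. -/

import Mathlib

open MeasureTheory Real

lemma intBdd {X : Type*} [MeasurableSpace X] (m : Measure X) [IsProbabilityMeasure m]
    (h : X → ℝ) (hm : Measurable h) (B : ℝ) (hB : ∀ x, |h x| ≤ B) : Integrable h m :=
  Integrable.mono' (integrable_const B) hm.aestronglyMeasurable
    (ae_of_all _ fun x => by simpa using hB x)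

lemma jensenExp {X : Type*} [MeasurableSpace X] (m : Measure X) [IsProbabilityMeasure m]
    (h : X → ℝ) (hm : Measurable h) (B : ℝ) (hB : ∀ x, |h x| ≤ B)
    (hint : 0 ≤ ∫ x, h x ∂m) (lam : ℝ) (hlam : 0 < lam) :
    1 ≤ ∫ x, Real.exp (h x / lam) ∂m := by
  have hi : Integrable (fun x => h x / lam) m :=
    (intBdd m h hm B hB).div_const lam
  have hie : Integrable (fun x => Real.exp (h x / lam)) m := by
    apply intBdd m _ (hm.div_const lam).exp (Real.exp (B / lam))
    intro x
    rw [abs_of_pos (Real.exp_pos _)]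
    apply Real.exp_le_exp.mpr
    gcongr
    exact (abs_le.mp (hB x)).2
  have hj := (convexOn_exp).map_integral_le (s := Set.univ)
    (Real.continuous_exp.continuousOn) isClosed_univ
    (ae_of_all _ fun x => Set.mem_univ _) hi hie
  calc 1 = Real.exp 0 := (Real.exp_zero).symm
    _ ≤ Real.exp (∫ x, h x / lam ∂m) := by
        apply Real.exp_le_exp.mpr
        rw [integral_div]
        positivity
    _ ≤ ∫ x, Real.exp (h x / lam) ∂m := hj

lemma potUpper {X : Type*} [MeasurableSpace X] (m : Measure X) [IsProbabilityMeasure m]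
    (lam Cc : ℝ) (hlam : 0 < lam) (h k : X → ℝ) (hh : Measurable h) (hk : Measurable k)
    (B : ℝ) (hB : ∀ x, |h x| ≤ B) (hk0 : ∀ x, 0 ≤ k x) (hkC : ∀ x, k x ≤ Cc)
    (hjen : 1 ≤ ∫ x, Real.exp (h x / lam) ∂m) :
    -lam * Real.log (∫ x, Real.exp ((h x - k x) / lam) ∂m) ≤ Cc := by
  set I := ∫ x, Real.exp ((h x - k x) / lam) ∂m with hI
  have hint1 : Integrable (fun x => Real.exp ((h x - k x) / lam)) m := by
    apply intBdd m _ (((hh.sub hk).div_const lam).exp) (Real.exp (B / lam))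
    intro x
    rw [abs_of_pos (Real.exp_pos _)]
    apply Real.exp_le_exp.mpr
    gcongr
    have := (abs_le.mp (hB x)).2
    have := hk0 x
    simp only [Pi.sub_apply]; linarith
  have hint2 : Integrable (fun x => Real.exp (-Cc / lam) * Real.exp (h x / lam)) m := by
    apply Integrable.const_mul
    apply intBdd m _ ((hh.div_const lam).exp) (Real.exp (B / lam))
    intro x
    rw [abs_of_pos (Real.exp_pos _)]
    apply Real.exp_le_exp.mpr
    gcongr
    exact (abs_le.mp (hB x)).2
  have hIge : Real.exp (-Cc / lam) ≤ I := by
    calc Real.exp (-Cc / lam) = Real.exp (-Cc / lam) * 1 := by ring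
      _ ≤ Real.exp (-Cc / lam) * ∫ x, Real.exp (h x / lam) ∂m := by
          exact mul_le_mul_of_nonneg_left hjen (Real.exp_pos _).le
      _ = ∫ x, Real.exp (-Cc / lam) * Real.exp (h x / lam) ∂m := (integral_const_mul _ _).symm
      _ ≤ I := by
          apply integral_mono hint2 hint1
          intro x
          show Real.exp (-Cc / lam) * Real.exp (h x / lam) ≤ Real.exp ((h x - k x) / lam)
          rw [← Real.exp_add]
          apply Real.exp_le_exp.mpr
          have := hk0 x
          have := hkC x
          rw [← add_div]
          gcongr
          linarith
  have hlog : -Cc / lam ≤ Real.log I := by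
    rw [← Real.log_exp (-Cc / lam)]
    exact (Real.log_le_log_iff (Real.exp_pos _) ((Real.exp_pos _).trans_le hIge)).mpr hIge
  have heq : lam * (-Cc / lam) = -Cc := by
    rw [mul_comm]; exact div_mul_cancel₀ _ hlam.ne'
  have h2 : lam * (-Cc / lam) ≤ lam * Real.log I := mul_le_mul_of_nonneg_left hlog hlam.le
  rw [heq] at h2
  linarith

lemma potLower {X : Type*} [MeasurableSpace X] (m : Measure X) [IsProbabilityMeasure m]
    (lam Cc : ℝ) (hlam : 0 < lam) (hCc : 0 ≤ Cc) (h k : X → ℝ) (hh : Measurable h)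
    (hk : Measurable k) (hk0 : ∀ x, 0 ≤ k x) (hkC : ∀ x, k x ≤ Cc)
    (B : ℝ) (hB : ∀ x, |h x| ≤ B) (hhC : ∀ x, h x ≤ Cc) :
    -Cc ≤ -lam * Real.log (∫ x, Real.exp ((h x - k x) / lam) ∂m) := by
  set I := ∫ x, Real.exp ((h x - k x) / lam) ∂m with hI
  have hint1 : Integrable (fun x => Real.exp ((h x - k x) / lam)) m := by
    apply intBdd m _ (((hh.sub hk).div_const lam).exp) (Real.exp (Cc / lam))
    intro x
    rw [abs_of_pos (Real.exp_pos _)]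
    apply Real.exp_le_exp.mpr
    gcongr
    have := hhC x; have := hk0 x; simp only [Pi.sub_apply]; linarith
  have hIpos : 0 < I := by
    have : Real.exp ((-B - Cc) / lam) ≤ I := by
      calc Real.exp ((-B - Cc) / lam) = ∫ _x, Real.exp ((-B - Cc) / lam) ∂m := by
            simp
        _ ≤ I := by
            apply integral_mono (integrable_const _) hint1
            intro x
            apply Real.exp_le_exp.mpr
            have h1 : -B - Cc ≤ h x - k x := by
              have := (abs_le.mp (hB x)).1; have := hkC x; linarith
            gcongr
    exact (Real.exp_pos _).trans_le this
  have hIle : I ≤ Real.exp (Cc / lam) := by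
    calc I ≤ ∫ _x, Real.exp (Cc / lam) ∂m := by
          apply integral_mono hint1 (integrable_const _)
          intro x
          apply Real.exp_le_exp.mpr
          gcongr
          have := hhC x; have := hk0 x; linarith
      _ = Real.exp (Cc / lam) := by simp
  have hlog : Real.log I ≤ Cc / lam := by
    rw [← Real.log_exp (Cc / lam)]
    exact (Real.log_le_log_iff hIpos (Real.exp_pos _)).mpr hIle
  have heq : lam * (Cc / lam) = Cc := by
    rw [mul_comm]; exact div_mul_cancel₀ _ hlam.ne'
  have h2 : lam * Real.log I ≤ lam * (Cc / lam) := mul_le_mul_of_nonneg_left hlog hlam.le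
  rw [heq] at h2
  linarith

/-- If `f, g` solve the Schrödinger system for a bounded nonnegative cost,
with `∫ g dν = 0` and `∫ f dμ = EOT ≥ 0`, then `‖f‖_∞ ≤ ‖c‖_∞` and `‖g‖_∞ ≤ ‖c‖_∞`. -/
theorem eot_potentials_sup_norm_bound
    {X : Type*} [MeasurableSpace X] [Nonempty X]
    (μ ν : Measure X) [IsProbabilityMeasure μ] [IsProbabilityMeasure ν]
    (c : X → X → ℝ) (Cc : ℝ)
    (hc_meas : Measurable (Function.uncurry c))
    (hc_nonneg : ∀ x y, 0 ≤ c x y)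
    (hc_bdd : ∀ x y, c x y ≤ Cc)
    (lam : ℝ) (hlam : 0 < lam)
    (f g : X → ℝ)
    (hf_meas : Measurable f) (hg_meas : Measurable g)
    (hf_bdd : ∃ B, ∀ x, |f x| ≤ B) (hg_bdd : ∃ B, ∀ y, |g y| ≤ B)
    (hg_norm : ∫ y, g y ∂ν = 0)
    (hf_int_nonneg : 0 ≤ ∫ x, f x ∂μ)
    (hfix_f : ∀ x, f x = -lam * Real.log (∫ y, Real.exp ((g y - c x y) / lam) ∂ν))
    (hfix_g : ∀ y, g y = -lam * Real.log (∫ x, Real.exp ((f x - c x y) / lam) ∂μ)) :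
    (∀ x, |f x| ≤ Cc) ∧ (∀ y, |g y| ≤ Cc) := by
  have x0 : X := Classical.arbitrary X
  have hCc : 0 ≤ Cc := (hc_nonneg x0 x0).trans (hc_bdd x0 x0)
  obtain ⟨Bf, hBf⟩ := hf_bdd
  obtain ⟨Bg, hBg⟩ := hg_bdd
  have hcy : ∀ y, Measurable fun x => c x y := fun y =>
    hc_meas.comp (measurable_prodMk_right : Measurable fun x : X => (x, y))
  have hcx : ∀ x, Measurable fun y => c x y := fun x =>
    hc_meas.comp (measurable_prodMk_left : Measurable fun y : X => (x, y))
  have hjf : 1 ≤ ∫ x, Real.exp (f x / lam) ∂μ :=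
    jensenExp μ f hf_meas Bf hBf hf_int_nonneg lam hlam
  have hjg : 1 ≤ ∫ y, Real.exp (g y / lam) ∂ν :=
    jensenExp ν g hg_meas Bg hBg hg_norm.symm.le lam hlam
  have hgU : ∀ y, g y ≤ Cc := fun y => by
    rw [hfix_g y]
    exact potUpper μ lam Cc hlam f _ hf_meas (hcy y) Bf hBf
      (fun x => hc_nonneg x y) (fun x => hc_bdd x y) hjf
  have hfU : ∀ x, f x ≤ Cc := fun x => by
    rw [hfix_f x]
    exact potUpper ν lam Cc hlam g _ hg_meas (hcx x) Bg hBg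
      (fun y => hc_nonneg x y) (fun y => hc_bdd x y) hjg
  have hfL : ∀ x, -Cc ≤ f x := fun x => by
    rw [hfix_f x]
    exact potLower ν lam Cc hlam hCc g _ hg_meas (hcx x)
      (fun y => hc_nonneg x y) (fun y => hc_bdd x y) Bg hBg hgU
  have hgL : ∀ y, -Cc ≤ g y := fun y => by
    rw [hfix_g y]
    exact potLower μ lam Cc hlam hCc f _ hf_meas (hcy y)
      (fun x => hc_nonneg x y) (fun x => hc_bdd x y) Bf hBf hfU
  exact ⟨fun x => abs_le.mpr ⟨hfL x, hfU x⟩, fun y => abs_le.mpr ⟨hgL y, hgU y⟩⟩
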